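/- Let f be a meromorphic function on ℂ with the property that for every ε > 0 and every R > 0 there is u with |u| > R and |f(u) - b| < ε, where b ∈ ℂ is fixed. Suppose b is attained by f with total multiplicity m at points u₁, …, u_m in some disc. Then in every neighborhood of b there is a value c attained by f at least m + 1 times (counted at distinct points of ℂ). -/

import Mathlib

open Metric Filter

/-- Separation: disjoint balls around distinct points. -/
lemma sep_balls {m : ℕ} (u : Fin m → ℂ) (hui : Function.Injective u) :
    ∃ r > (0 : ℝ), ∀ i j, i ≠ j → Disjoint (Metric.ball (u i) r) (Metric.ball (u j) r) := by
  rcases Nat.eq_zero_or_pos m with hm | hm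
  · subst hm
    exact ⟨1, one_pos, fun i => i.elim0⟩
  · have : Nonempty (Fin m × Fin m) := ⟨⟨⟨0, hm⟩, ⟨0, hm⟩⟩⟩
    set F : Fin m × Fin m → ℝ := fun p =>
      if p.1 = p.2 then 1 else dist (u p.1) (u p.2) / 3 with hF
    refine ⟨Finset.univ.inf' Finset.univ_nonempty F, ?_, ?_⟩
    · rw [gt_iff_lt, Finset.lt_inf'_iff]
      intro p _
      simp only [hF]
      split
      · exact one_pos
      · have : u p.1 ≠ u p.2 := fun h => ‹¬ p.1 = p.2› (hui h)
        have := dist_pos.mpr this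
        linarith
    · intro i j hij
      apply Metric.ball_disjoint_ball
      have h1 : Finset.univ.inf' Finset.univ_nonempty F ≤ F (i, j) :=
        Finset.inf'_le _ (Finset.mem_univ _)
      have h2 : F (i, j) = dist (u i) (u j) / 3 := by simp [hF, hij]
      rw [h2] at h1
      have := dist_pos.mpr (fun h => hij (hui h))
      linarith

/-- If a nonconstant meromorphic `f` comes arbitrarily close to the value `b` outside
every disc, and `b` is attained at the `m` distinct points `u₁, …, u_m`, then every
neighborhood of `b` contains a value attained by `f` at at least `m + 1` distinct points. -/
theorem stmt_15 (f : ℂ → ℂ) (hf : MeromorphicOn f Set.univ)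
    (hnc : ¬ ∃ c, ∀ u, f u = c) (b : ℂ)
    (hclose : ∀ ε > (0 : ℝ), ∀ R > (0 : ℝ), ∃ u : ℂ,
      R < ‖u‖ ∧ ‖f u - b‖ < ε)
    (m : ℕ) (u : Fin m → ℂ) (hui : Function.Injective u)
    (huan : ∀ i, AnalyticAt ℂ f (u i)) (hub : ∀ i, f (u i) = b) :
    ∀ ε > (0 : ℝ), ∃ c : ℂ, ‖c - b‖ < ε ∧
      ∃ pts : Fin (m + 1) → ℂ, Function.Injective pts ∧ ∀ i, f (pts i) = c := by
  intro ε hε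
  by_cases hA : ∃ i, ∀ᶠ z in nhds (u i), f z = f (u i)
  · -- f is locally constant (equal to b) near some u i : take c = b and m+1 points in the ball
    obtain ⟨i, hi⟩ := hA
    rw [Metric.eventually_nhds_iff] at hi
    obtain ⟨δ, hδ, hball⟩ := hi
    refine ⟨b, by simpa using hε, fun j => u i + ((δ / (2 + (j : ℕ))) : ℝ), ?_, ?_⟩
    · intro j k h
      have h2 : ((δ / (2 + (j : ℕ)) : ℝ) : ℂ) = ((δ / (2 + (k : ℕ)) : ℝ) : ℂ) :=
        add_left_cancel h
      have h3 : δ / (2 + (j : ℕ)) = δ / (2 + (k : ℕ)) := by exact_mod_cast h2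
      have hj : (2 + (j : ℕ) : ℝ) ≠ 0 := by positivity
      have hk : (2 + (k : ℕ) : ℝ) ≠ 0 := by positivity
      field_simp at h3
      have h3' : ((k : ℕ) : ℝ) = (j : ℕ) := by linarith
      have : (k : ℕ) = (j : ℕ) := by exact_mod_cast h3'
      exact (Fin.ext this).symm
    · intro j
      have hd : dist (u i + ((δ / (2 + (j : ℕ))) : ℝ)) (u i) < δ := by
        rw [Complex.dist_eq, add_sub_cancel_left, Complex.norm_real, Real.norm_eq_abs, abs_of_pos (by positivity)]
        have h2 : (2 : ℝ) ≤ 2 + (j : ℕ) := by simp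
        calc δ / (2 + (j : ℕ)) ≤ δ / 2 := by
              apply div_le_div_of_nonneg_left (le_of_lt hδ) two_pos h2
          _ < δ := by linarith
      rw [hball hd, hub i]
  · -- open mapping case
    push_neg at hA
    have hmap : ∀ i, nhds b ≤ Filter.map f (nhds (u i)) := by
      intro i
      have := (huan i).eventually_constant_or_nhds_le_map_nhds.resolve_left (Filter.not_eventually.mpr (hA i))
      rwa [hub i] at this
    obtain ⟨r, hr, hdisj⟩ := sep_balls u hui
    have hsub0 : ∀ i, ∃ e > (0 : ℝ), Metric.ball b e ⊆ f '' Metric.ball (u i) r := by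
      intro i
      exact Metric.mem_nhds_iff.mp
        (hmap i (Filter.image_mem_map (Metric.ball_mem_nhds _ hr)))
    choose e he hsub using hsub0
    -- δ := positive min of ε and all e i, via a function on Fin (m+1)
    set F : Fin (m + 1) → ℝ := fun j => if h : (j : ℕ) < m then e ⟨j, h⟩ else ε with hF
    set δ : ℝ := Finset.univ.inf' Finset.univ_nonempty F with hδdef
    have hδpos : 0 < δ := by
      rw [hδdef, Finset.lt_inf'_iff]
      intro j _
      simp only [hF]
      split
      · exact he _
      · exact hε
    have hδε : δ ≤ ε := by
      have := Finset.inf'_le F (Finset.mem_univ (Fin.last m))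
      simpa only [hF, Fin.val_last, lt_irrefl, dif_neg (lt_irrefl m), dite_false] using this
    have hδe : ∀ i, δ ≤ e i := by
      intro i
      have := Finset.inf'_le F (Finset.mem_univ i.castSucc)
      rw [hF] at this
      simp only [Fin.coe_castSucc] at this
      rw [dif_pos i.isLt] at this
      exact this
    -- R large enough
    set R : ℝ := 1 + r + ∑ i, ‖u i‖ with hR
    have hRpos : 0 < R := by positivity
    obtain ⟨w, hwR, hwb⟩ := hclose δ hδpos R hRpos
    have hwfar : ∀ i, w ∉ Metric.ball (u i) r := by
      intro i hw
      rw [Metric.mem_ball, Complex.dist_eq] at hw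
      have h1 : ‖u i‖ ≤ ∑ j, ‖u j‖ :=
        Finset.single_le_sum (f := fun j => ‖u j‖)
          (fun j _ => norm_nonneg _) (Finset.mem_univ i)
      have h2 : ‖w‖ - ‖u i‖ ≤ ‖w - u i‖ := by
        simpa using norm_sub_norm_le w (u i)
      rw [hR] at hwR
      linarith
    set c : ℂ := f w with hc
    have hcb : ∀ i, c ∈ Metric.ball b (e i) := by
      intro i
      rw [Metric.mem_ball, Complex.dist_eq]
      exact lt_of_lt_of_le hwb (hδe i)
    have hv0 : ∀ i, ∃ v ∈ Metric.ball (u i) r, f v = c := fun i => hsub i (hcb i)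
    choose v hv hvc using hv0
    refine ⟨c, lt_of_lt_of_le hwb hδε, Fin.snoc v w, ?_, ?_⟩
    · intro j k h
      induction j using Fin.lastCases with
      | last =>
        induction k using Fin.lastCases with
        | last => rfl
        | cast k =>
          rw [Fin.snoc_last, Fin.snoc_castSucc] at h
          exact absurd (h ▸ hv k) (hwfar k)
      | cast j =>
        induction k using Fin.lastCases with
        | last =>
          rw [Fin.snoc_last, Fin.snoc_castSucc] at h
          exact absurd (h ▸ hv j) (hwfar j)
        | cast k =>
          rw [Fin.snoc_castSucc, Fin.snoc_castSucc] at h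
          by_contra hjk
          have hjk' : j ≠ k := fun h' => hjk (by rw [h'])
          exact (hdisj j k hjk').ne_of_mem (hv j) (hv k) h
    · intro j
      induction j using Fin.lastCases with
      | last => rw [Fin.snoc_last]
      | cast j => rw [Fin.snoc_castSucc]; exact hvc j
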